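/- Let p be an odd prime and define a(j) for positive integers j by: a(j) = p^{k+1} if j = 2(p-1)p^k r - 1 with r not divisible by p and k ≥ 0, and a(j) = 1 otherwise (with a(j) interpreted as the order of π_j L_{K(1)} S^0 in positive degrees). Then for every n ≥ 0, (1/(2(p-1)p^n)) · ∑_{j=1}^{2(p-1)p^n} (-1)^j a(j) = -(1+n)/2. -/

import Mathlib

/-- The order of `π_j L_{K(1)} S⁰` for `j ≥ 1` (at the odd prime `p`):
`p^(k+1)` if `j = 2(p-1)p^k r - 1` with `p ∤ r`, and `1` otherwise.
Equivalently, `j+1 = 2(p-1)·m` for some `m ≥ 1`, and then `k = v_p(m)`. -/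
def K1SphereOrder (p j : ℕ) : ℕ :=
  if 2 * (p - 1) ∣ (j + 1) then p ^ (padicValNat p ((j + 1) / (2 * (p - 1))) + 1) else 1

private lemma geom_nat (q k : ℕ) : q * ∑ i ∈ Finset.range k, (1 + q) ^ i + 1 = (1 + q) ^ k := by
  induction k with
  | zero => simp
  | succ k ih => rw [Finset.sum_range_succ, pow_succ, ← ih]; ring

/-- Key counting lemma: `∑_{m=1}^{p^n} p^{v_p(m)+1} = (n+1)(p-1)p^n + p^n`. -/
private lemma sumv (p n : ℕ) (hp : p.Prime) :
    ∑ m ∈ Finset.Icc 1 (p ^ n), p ^ (padicValNat p m + 1)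
      = (n + 1) * ((p - 1) * p ^ n) + p ^ n := by
  haveI : Fact p.Prime := ⟨hp⟩
  have hp1 : 1 < p := hp.one_lt
  have key : ∀ m ∈ Finset.Icc 1 (p ^ n),
      p ^ (padicValNat p m + 1)
        = (p - 1) * ∑ i ∈ Finset.range (n + 1), (if p ^ i ∣ m then p ^ i else 0) + 1 := by
    intro m hm
    rw [Finset.mem_Icc] at hm
    have hm0 : m ≠ 0 := by omega
    have hv : padicValNat p m ≤ n := by
      have h1 : p ^ padicValNat p m ≤ p ^ n :=
        le_trans (Nat.le_of_dvd (by omega) pow_padicValNat_dvd) hm.2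
      exact (Nat.pow_le_pow_iff_right hp1).mp h1
    have hsum : ∑ i ∈ Finset.range (n + 1), (if p ^ i ∣ m then p ^ i else 0)
        = ∑ i ∈ Finset.range (padicValNat p m + 1), p ^ i := by
      rw [← Finset.sum_subset (Finset.range_subset_range.mpr (by omega) :
        Finset.range (padicValNat p m + 1) ⊆ Finset.range (n + 1))]
      · exact Finset.sum_congr rfl fun i hi => by
          rw [if_pos ((padicValNat_dvd_iff_le hm0).mpr
            (Nat.lt_succ_iff.mp (Finset.mem_range.mp hi)))]
      · intro i _ hi
        rw [Finset.mem_range, Nat.lt_succ_iff, not_le] at hi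
        rw [if_neg]
        intro hdvd
        exact absurd ((padicValNat_dvd_iff_le hm0).mp hdvd) (by omega)
    rw [hsum]
    obtain ⟨q, rfl⟩ : ∃ q, p = 1 + q := ⟨p - 1, by omega⟩
    have : 1 + q - 1 = q := by omega
    rw [this, geom_nat]
  have inner : ∀ i ∈ Finset.range (n + 1),
      ∑ m ∈ Finset.Icc 1 (p ^ n), (if p ^ i ∣ m then p ^ i else 0) = p ^ n := by
    intro i hi
    rw [Finset.mem_range, Nat.lt_succ_iff] at hi
    rw [← Finset.sum_filter, Finset.sum_const, smul_eq_mul]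
    have h1 : Finset.Icc 1 (p ^ n) = Finset.Ioc 0 (p ^ n) := rfl
    rw [h1, Nat.Ioc_filter_dvd_card_eq_div, Nat.pow_div hi (by omega), ← pow_add]
    congr 1
    omega
  calc ∑ m ∈ Finset.Icc 1 (p ^ n), p ^ (padicValNat p m + 1)
      = ∑ m ∈ Finset.Icc 1 (p ^ n),
          ((p - 1) * ∑ i ∈ Finset.range (n + 1), (if p ^ i ∣ m then p ^ i else 0) + 1) :=
        Finset.sum_congr rfl key
    _ = (p - 1) * ∑ i ∈ Finset.range (n + 1),
          (∑ m ∈ Finset.Icc 1 (p ^ n), (if p ^ i ∣ m then p ^ i else 0))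
          + (Finset.Icc 1 (p ^ n)).card := by
        rw [Finset.sum_add_distrib, Finset.sum_const, smul_eq_mul, mul_one, ← Finset.mul_sum,
          Finset.sum_comm]
    _ = (p - 1) * ∑ _i ∈ Finset.range (n + 1), p ^ n + p ^ n := by
        rw [Finset.sum_congr rfl inner, Nat.card_Icc]
        congr 1
    _ = (n + 1) * ((p - 1) * p ^ n) + p ^ n := by
        rw [Finset.sum_const, Finset.card_range, smul_eq_mul]; ring

/-- The graded average of the orders of the first `2(p-1)p^n` positive-degree
`K(1)`-local stable stems of the sphere equals `-(1+n)/2`. -/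
theorem statement2 (p : ℕ) (hp : p.Prime) (hodd : Odd p) (n : ℕ) :
    (∑ j ∈ Finset.Icc 1 (2 * (p - 1) * p ^ n), (-1 : ℚ) ^ j * (K1SphereOrder p j : ℚ)) /
      ((2 * (p - 1) * p ^ n : ℕ) : ℚ) = -(1 + (n : ℚ)) / 2 := by
  haveI : Fact p.Prime := ⟨hp⟩
  have hp3 : 3 ≤ p := by
    rcases hp.two_le.lt_or_eq with h | h
    · omega
    · exact absurd hodd (by rw [← h]; decide)
  set d : ℕ := 2 * (p - 1) with hd
  have hd4 : 4 ≤ d := by omega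
  have hd0 : 0 < d := by omega
  have hpn0 : 0 < p ^ n := Nat.pow_pos (by omega)
  -- Step 1: rewrite each summand
  have hsplit : ∀ j ∈ Finset.Icc 1 (d * p ^ n),
      (-1 : ℚ) ^ j * (K1SphereOrder p j : ℚ)
        = (-1 : ℚ) ^ j - (if d ∣ (j + 1) then
            ((p : ℚ) ^ (padicValNat p ((j + 1) / d) + 1) - 1) else 0) := by
    intro j _
    by_cases h : d ∣ (j + 1)
    · have hjodd : Odd j := by
        have h2 : 2 ∣ (j + 1) := dvd_trans ⟨p - 1, rfl⟩ h
        rw [Nat.odd_iff]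
        omega
      rw [K1SphereOrder, if_pos h, if_pos h, hjodd.neg_one_pow]
      push_cast
      ring
    · rw [K1SphereOrder, if_neg h, if_neg h]
      simp
  rw [Finset.sum_congr rfl hsplit, Finset.sum_sub_distrib]
  -- Step 2: alternating sum of ones vanishes
  have hA : ∑ j ∈ Finset.Icc 1 (d * p ^ n), (-1 : ℚ) ^ j = 0 := by
    rw [← Finset.Ico_add_one_right_eq_Icc, Finset.sum_Ico_eq_sum_range]
    have h1 : d * p ^ n + 1 - 1 = d * p ^ n := by omega
    rw [h1]
    have h2 : ∀ i ∈ Finset.range (d * p ^ n), (-1 : ℚ) ^ (1 + i) = -((-1 : ℚ) ^ i) := by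
      intro i _; rw [pow_add]; ring
    rw [Finset.sum_congr rfl h2, Finset.sum_neg_distrib, neg_one_geom_sum,
      if_pos ⟨(p - 1) * p ^ n, by ring⟩, neg_zero]
  rw [hA]
  -- Step 3: reindex the correction sum
  have hB : ∑ j ∈ Finset.Icc 1 (d * p ^ n), (if d ∣ (j + 1) then
      ((p : ℚ) ^ (padicValNat p ((j + 1) / d) + 1) - 1) else 0)
      = ∑ m ∈ Finset.Icc 1 (p ^ n), ((p : ℚ) ^ (padicValNat p m + 1) - 1) := by
    rw [← Finset.sum_filter]
    refine Finset.sum_nbij' (fun j => (j + 1) / d) (fun m => d * m - 1) ?_ ?_ ?_ ?_ ?_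
    · intro j hj
      rw [Finset.mem_filter, Finset.mem_Icc] at hj
      obtain ⟨⟨hj1, hj2⟩, m, hm⟩ := hj
      rw [hm, Nat.mul_div_cancel_left _ hd0, Finset.mem_Icc]
      constructor
      · rcases Nat.eq_zero_or_pos m with rfl | h
        · omega
        · exact h
      · by_contra h
        push_neg at h
        have h1 : d * (p ^ n + 1) ≤ d * m := Nat.mul_le_mul_left d h
        have h2 : d * (p ^ n + 1) = d * p ^ n + d := by ring
        omega
    · intro m hm
      rw [Finset.mem_Icc] at hm
      have hdm : d ≤ d * m := le_trans (by omega) (Nat.mul_le_mul_left d hm.1)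
      have hdm2 : d * m ≤ d * p ^ n := Nat.mul_le_mul_left d hm.2
      rw [Finset.mem_filter, Finset.mem_Icc]
      refine ⟨⟨by omega, by omega⟩, ?_⟩
      have h3 : d * m - 1 + 1 = d * m := by omega
      rw [h3]
      exact ⟨m, rfl⟩
    · intro j hj
      rw [Finset.mem_filter, Finset.mem_Icc] at hj
      obtain ⟨⟨hj1, _⟩, hdvd⟩ := hj
      have h1 : d * ((j + 1) / d) = j + 1 := Nat.mul_div_cancel' hdvd
      omega
    · intro m hm
      rw [Finset.mem_Icc] at hm
      have hdm : d ≤ d * m := le_trans (by omega) (Nat.mul_le_mul_left d hm.1)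
      have h3 : d * m - 1 + 1 = d * m := by omega
      rw [h3, Nat.mul_div_cancel_left _ hd0]
    · intro j _; rfl
  rw [hB, Finset.sum_sub_distrib, Finset.sum_const, Nat.card_Icc, nsmul_eq_mul, mul_one]
  have hC : ∑ m ∈ Finset.Icc 1 (p ^ n), (p : ℚ) ^ (padicValNat p m + 1)
      = (((n + 1) * ((p - 1) * p ^ n) + p ^ n : ℕ) : ℚ) := by
    rw [← sumv p n hp]
    push_cast
    rfl
  rw [hC]
  have hcast : ((p ^ n + 1 - 1 : ℕ) : ℚ) = (p : ℚ) ^ n := by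
    have h : p ^ n + 1 - 1 = p ^ n := by omega
    rw [h]
    push_cast
    ring
  rw [hcast]
  have hq0 : ((p - 1 : ℕ) : ℚ) ≠ 0 := by
    have h : (1 : ℕ) ≤ p - 1 := by omega
    exact_mod_cast Nat.one_le_iff_ne_zero.mp h
  have hpq0 : (p : ℚ) ^ n ≠ 0 := by positivity
  rw [hd]
  push_cast
  have hq1 : (p : ℚ) - 1 ≠ 0 := by
    have h : (p : ℚ) ≠ 1 := by exact_mod_cast (by omega : p ≠ 1)
    exact sub_ne_zero.mpr h
  field_simp
  ring
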